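/- Let B be a real symmetric matrix with 0 ⪯ B ⪯ n·I where n ≥ 3 is a real number. Then −B(B − nI)(B − I) ⪯ ((n-1)^2/4)·B. -/

import Mathlib

open Matrix

theorem stmt11 {d : ℕ} (n : ℝ) (hn : 3 ≤ n) (B : Matrix (Fin d) (Fin d) ℝ)
    (hB : B.PosSemidef)
    (hBn : (n • (1 : Matrix (Fin d) (Fin d) ℝ) - B).PosSemidef) :
    (((n - 1) ^ 2 / 4) • B -
      (-(B * (B - n • (1 : Matrix (Fin d) (Fin d) ℝ)) *
        (B - (1 : Matrix (Fin d) (Fin d) ℝ))))).PosSemidef := by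
  have hA := hB.1
  set U : Matrix (Fin d) (Fin d) ℝ := (hA.eigenvectorUnitary : Matrix (Fin d) (Fin d) ℝ) with hUdef
  set D : Matrix (Fin d) (Fin d) ℝ := diagonal hA.eigenvalues with hD
  have hspec : B = U * D * Uᴴ := by
    have := hA.spectral_theorem
    simpa [U, D, Function.comp, Matrix.star_eq_conjTranspose] using this
  have hU : U * Uᴴ = 1 := by
    rw [← Matrix.star_eq_conjTranspose]
    exact (Matrix.mem_unitaryGroup_iff).mp hA.eigenvectorUnitary.2
  have hU' : Uᴴ * U = 1 := by
    rw [← Matrix.star_eq_conjTranspose]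
    exact (Matrix.mem_unitaryGroup_iff').mp hA.eigenvectorUnitary.2
  set f : Fin d → ℝ := fun i => hA.eigenvalues i * (hA.eigenvalues i - (n+1)/2)^2 with hf
  have key : (((n - 1) ^ 2 / 4) • B -
      (-(B * (B - n • (1 : Matrix (Fin d) (Fin d) ℝ)) *
        (B - (1 : Matrix (Fin d) (Fin d) ℝ))))) = U * diagonal f * Uᴴ := by
    have h1 : (1 : Matrix (Fin d) (Fin d) ℝ) = U * 1 * Uᴴ := by rw [mul_one, hU]
    rw [hspec]
    rw [sub_neg_eq_add]
    have : diagonal f = ((n - 1) ^ 2 / 4) • D + D * (D - n • 1) * (D - 1) := by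
      rw [hD, ← Matrix.diagonal_one, ← Matrix.diagonal_smul n]
      simp only [Matrix.diagonal_sub, Matrix.diagonal_mul_diagonal, ← Matrix.diagonal_smul,
        Matrix.diagonal_add]
      ext i j
      by_cases h : i = j
      · subst h
        simp only [Matrix.diagonal_apply_eq, f, Pi.smul_apply, smul_eq_mul]
        ring
      · simp [Matrix.diagonal_apply_ne _ h]
    rw [this]
    rw [Matrix.mul_add, Matrix.add_mul]
    congr 1
    · rw [Matrix.mul_smul, Matrix.smul_mul]
    · have e1 : U * D * Uᴴ - n • (1:Matrix (Fin d) (Fin d) ℝ) = U * (D - n • 1) * Uᴴ := by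
        rw [Matrix.mul_sub, Matrix.sub_mul, Matrix.mul_smul, Matrix.smul_mul, mul_one, hU]
      have e2 : U * D * Uᴴ - (1:Matrix (Fin d) (Fin d) ℝ) = U * (D - 1) * Uᴴ := by
        rw [Matrix.mul_sub, Matrix.sub_mul, mul_one, hU]
      rw [e1, e2]
      rw [show U * D * Uᴴ * (U * (D - n • 1) * Uᴴ) * (U * (D - 1) * Uᴴ)
          = U * (D * (Uᴴ * U) * (D - n • 1) * (Uᴴ * U) * (D - 1)) * Uᴴ by
        simp only [Matrix.mul_assoc]]
      rw [hU', mul_one, mul_one, Matrix.mul_assoc, Matrix.mul_assoc]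
  rw [key]
  refine Matrix.PosSemidef.mul_mul_conjTranspose_same ?_ U
  refine Matrix.posSemidef_diagonal_iff.mpr fun i => ?_
  have h0 := hB.eigenvalues_nonneg i
  exact mul_nonneg h0 (sq_nonneg _)
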